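/- Let k be a positive integer, γ > 0, and 0 < ε < π√(k/(2γ)). Let a₁,…,a_k be real numbers with a₁ + … + a_k = 0, set α_j = a₁ + … + a_j, and let g₁,…,g_k : [0,ε] → ℝ be continuously differentiable functions with ∫₀^ε g_j(x) dx = 0 for each j. If not all of the a_j are zero or not all of the g_j vanish identically, then Σ_{j=1}^k ∫₀^ε g_j'(x)² dx − (2γ/k) Σ_{j=1}^k ∫₀^ε g_j(x)² dx + (2γε/k)[4(α₁² + … + α_{k−1}²) − (a₁² + … + a_k²)] > 0. -/

import Mathlib

open MeasureTheory intervalIntegral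

noncomputable section AuxWirtinger

open MeasureTheory intervalIntegral Set AddCircle
open scoped ENNReal Real Interval

lemma intervalIntegrable_of_bdd {E : Type*} [NormedAddCommGroup E] {f : ℝ → E} {a b C : ℝ}
    (hmeas : AEStronglyMeasurable f volume) (hbd : ∀ x, ‖f x‖ ≤ C) :
    IntervalIntegrable f volume a b :=
  ⟨(integrable_const C).mono' hmeas.restrict (Filter.Eventually.of_forall hbd),
   (integrable_const C).mono' hmeas.restrict (Filter.Eventually.of_forall hbd)⟩

lemma measurable_liftIoc {T : ℝ} [hT : Fact (0 < T)] (a : ℝ) (f : ℝ → ℂ) (hf : Measurable f) :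
    Measurable (AddCircle.liftIoc T a f) :=
  (hf.comp measurable_subtype_coe).comp (AddCircle.measurableEquivIoc T a).measurable

/-- Parseval on an interval [a, a+T]. -/
lemma parseval_interval {T : ℝ} [hT : Fact (0 < T)] (a : ℝ) (f : ℝ → ℂ)
    (hmeas : Measurable f) (C : ℝ) (hbound : ∀ x, ‖f x‖ ≤ C) :
    Summable (fun n : ℤ => ‖fourierCoeffOn (lt_add_of_pos_right a hT.out) f n‖ ^ 2) ∧
    ∑' n : ℤ, ‖fourierCoeffOn (lt_add_of_pos_right a hT.out) f n‖ ^ 2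
      = (1 / T) * ∫ x in a..(a + T), ‖f x‖ ^ 2 := by
  set F : AddCircle T → ℂ := AddCircle.liftIoc T a f with hF
  have hFmeas : Measurable F := measurable_liftIoc a f hmeas
  have hFbound : ∀ z, ‖F z‖ ≤ C := by
    intro z
    exact hbound _
  have hmem : MemLp F 2 haarAddCircle :=
    MemLp.of_bound hFmeas.aestronglyMeasurable C (Filter.Eventually.of_forall hFbound)
  set fL : Lp ℂ 2 (@haarAddCircle T hT) := hmem.toLp F with hfL
  have hcoeff : ∀ n : ℤ, fourierCoeff (fL : AddCircle T → ℂ) n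
      = fourierCoeffOn (lt_add_of_pos_right a hT.out) f n := by
    intro n
    rw [← fourierCoeff_liftIoc_eq (T := T) (a := a) f n]
    apply MeasureTheory.integral_congr_ae
    filter_upwards [hmem.coeFn_toLp] with z hz
    rw [hz]
  have hsummable : Summable (fun n : ℤ => ‖fourierCoeff (fL : AddCircle T → ℂ) n‖ ^ 2) := by
    have h1 : Memℓp (fourierBasis.repr fL) 2 := lp.memℓp _
    have h2 := h1.summable (by norm_num : 0 < (2 : ℝ≥0∞).toReal)
    have h3 : ∀ n : ℤ, ‖fourierBasis.repr fL n‖ ^ (2 : ℝ≥0∞).toReal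
        = ‖fourierCoeff (fL : AddCircle T → ℂ) n‖ ^ 2 := by
      intro n
      rw [fourierBasis_repr]
      rw [show ((2 : ℝ≥0∞).toReal) = ((2 : ℕ) : ℝ) by norm_num, Real.rpow_natCast]
    simpa only [h3] using h2
  have hparseval := tsum_sq_fourierCoeff fL
  have hrhs : ∫ t : AddCircle T, ‖(fL : AddCircle T → ℂ) t‖ ^ 2 ∂haarAddCircle
      = (1 / T) * ∫ x in a..(a + T), ‖f x‖ ^ 2 := by
    have e1 : ∫ t : AddCircle T, ‖(fL : AddCircle T → ℂ) t‖ ^ 2 ∂haarAddCircle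
        = ∫ t : AddCircle T, ‖F t‖ ^ 2 ∂haarAddCircle := by
      apply MeasureTheory.integral_congr_ae
      filter_upwards [hmem.coeFn_toLp] with z hz
      rw [hz]
    have e2 : ∫ x in a..(a + T), ‖f x‖ ^ 2 = ∫ x in a..(a + T), ‖F (x : AddCircle T)‖ ^ 2 := by
      rw [integral_of_le (by linarith [hT.out] : a ≤ a + T),
        integral_of_le (by linarith [hT.out] : a ≤ a + T)]
      refine setIntegral_congr_fun measurableSet_Ioc fun x hx => ?_
      rw [hF, AddCircle.liftIoc_coe_apply hx]
    have e3 : ∫ x in a..(a + T), ‖F (x : AddCircle T)‖ ^ 2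
        = ∫ t : AddCircle T, ‖F t‖ ^ 2 := AddCircle.intervalIntegral_preimage T a (fun z => ‖F z‖ ^ 2)
    have e4 : ∫ t : AddCircle T, ‖F t‖ ^ 2
        = T * ∫ t : AddCircle T, ‖F t‖ ^ 2 ∂haarAddCircle := by
      rw [AddCircle.volume_eq_smul_haarAddCircle, MeasureTheory.integral_smul_measure,
        ENNReal.toReal_ofReal hT.out.le, smul_eq_mul]
    rw [e1, e2, e3, e4, ← mul_assoc, one_div_mul_cancel hT.out.ne', one_mul]
  constructor
  · simpa only [hcoeff] using hsummable
  · calc ∑' n : ℤ, ‖fourierCoeffOn (lt_add_of_pos_right a hT.out) f n‖ ^ 2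
        = ∑' n : ℤ, ‖fourierCoeff (fL : AddCircle T → ℂ) n‖ ^ 2 := by simp_rw [hcoeff]
      _ = _ := by rw [hparseval, hrhs]

lemma ofReal_hasDerivWithinAt {f : ℝ → ℝ} {u x : ℝ} {s : Set ℝ}
    (hf : HasDerivWithinAt f u s x) :
    HasDerivWithinAt (fun y => (f y : ℂ)) (u : ℂ) s x := by
  exact (by simpa using
    (Complex.ofRealCLM.hasFDerivAt.comp_hasFDerivWithinAt x hf.hasFDerivWithinAt).hasDerivWithinAt :
      HasDerivWithinAt (⇑Complex.ofRealCLM ∘ f) (u : ℂ) s x)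

/-- Wirtinger's inequality for mean-zero C¹ functions on `[0, ε]`. -/
lemma wirtinger {ε : ℝ} (hε0 : 0 < ε) (g g' : ℝ → ℝ)
    (hderiv : ∀ x ∈ Icc (0:ℝ) ε, HasDerivWithinAt g (g' x) (Icc (0:ℝ) ε) x)
    (hcont : ContinuousOn g' (Icc (0:ℝ) ε))
    (hmean : ∫ x in (0:ℝ)..ε, g x = 0) :
    (π / ε) ^ 2 * ∫ x in (0:ℝ)..ε, (g x) ^ 2 ≤ ∫ x in (0:ℝ)..ε, (g' x) ^ 2 := by
  haveI hT : Fact (0 < 2 * ε) := ⟨by linarith⟩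
  have hπ := Real.pi_pos
  -- clamp function
  set c : ℝ → ℝ := fun y => min ε (max 0 y) with hcdef
  have hc_cont : Continuous c := (continuous_const.min ((continuous_const.max continuous_id)))
  have hc_mem : ∀ y, c y ∈ Icc (0:ℝ) ε := fun y =>
    ⟨le_min hε0.le (le_max_left _ _), min_le_left _ _⟩
  have hc_id : ∀ y ∈ Icc (0:ℝ) ε, c y = y := fun y hy => by
    simp [hcdef, max_eq_right hy.1, min_eq_right hy.2]
  have hgc : ContinuousOn g (Icc (0:ℝ) ε) := fun x hx =>
    (hderiv x hx).continuousWithinAt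
  set G : ℝ → ℝ := fun y => g (c y) with hGdef
  set G' : ℝ → ℝ := fun y => g' (c y) with hG'def
  have hGcont : Continuous G := hgc.comp_continuous hc_cont hc_mem
  have hG'cont : Continuous G' := hcont.comp_continuous hc_cont hc_mem
  set H : ℝ → ℝ := fun x => G |x| with hHdef
  set H' : ℝ → ℝ := fun x => if x < 0 then -(G' (-x)) else G' x with hH'def
  have hHcont : Continuous H := hGcont.comp continuous_abs
  have hH'meas : Measurable H' := by
    refine Measurable.ite (measurableSet_Iio (a := (0:ℝ))) ?_ ?_
    · exact (hG'cont.comp continuous_neg).measurable.neg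
    · exact hG'cont.measurable
  have hHcmeas : Measurable (fun x => (H x : ℂ)) :=
    Complex.measurable_ofReal.comp hHcont.measurable
  have hH'cmeas : Measurable (fun x => (H' x : ℂ)) :=
    Complex.measurable_ofReal.comp hH'meas
  have hnormsq : ∀ r : ℝ, ‖(r:ℂ)‖^2 = r^2 := fun r => by
    rw [Complex.norm_real, Real.norm_eq_abs, sq_abs]
  -- bounds
  obtain ⟨C, hC⟩ := isCompact_Icc.exists_bound_of_continuousOn hgc
  obtain ⟨C', hC'⟩ := isCompact_Icc.exists_bound_of_continuousOn hcont
  have hHbd : ∀ x, ‖(H x : ℂ)‖ ≤ C := fun x => by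
    simpa [Complex.norm_real] using hC (c |x|) (hc_mem _)
  have hH'bd : ∀ x, ‖(H' x : ℂ)‖ ≤ C' := fun x => by
    simp only [Complex.norm_real, hH'def]
    split_ifs with h
    · simpa using hC' (c (-x)) (hc_mem _)
    · simpa using hC' (c x) (hc_mem _)
  -- H agrees with g on [0, ε]
  have hHg : ∀ x ∈ Icc (0:ℝ) ε, H x = g x := fun x hx => by
    simp only [hHdef, hGdef, abs_of_nonneg hx.1, hc_id x hx]
  have hH'g : ∀ x ∈ Icc (0:ℝ) ε, H' x = g' x := fun x hx => by
    simp only [hH'def, hG'def, if_neg (not_lt.mpr hx.1), hc_id x hx]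
  have hHeven : ∀ x, H (-x) = H x := fun x => by simp only [hHdef, abs_neg]
  have hH'negsq : ∀ x ∈ Icc (0:ℝ) ε, (H' (-x))^2 = (g' x)^2 := by
    intro x hx
    rcases eq_or_lt_of_le hx.1 with heq | hlt
    · rw [← heq]
      simp only [neg_zero, hH'def, if_neg (lt_irrefl (0:ℝ)), hG'def,
        hc_id 0 ⟨le_rfl, hε0.le⟩]
    · have hneg : -x < 0 := by linarith
      simp only [hH'def, if_pos hneg, neg_neg, neg_sq, hG'def, hc_id x hx]
  -- derivative of the even extension
  have hgC1 : ∀ x ∈ Ioo (0:ℝ) ε, HasDerivAt g (g' x) x := fun x hx =>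
    (hderiv x (Ioo_subset_Icc_self hx)).hasDerivAt (Icc_mem_nhds hx.1 hx.2)
  have hHDr : ∀ x ∈ Ioo (-ε) ε, HasDerivWithinAt H (H' x) (Ioi x) x := by
    intro x hx
    rcases lt_trichotomy x 0 with hx0 | rfl | hx0
    · -- x < 0
      have hx' : -x ∈ Ioo (0:ℝ) ε := ⟨by linarith, by linarith [hx.1]⟩
      have h1 : HasDerivAt (fun y => g (-y)) (-(g' (-x))) x := by
        have h0 := (hgC1 _ hx').comp x (hasDerivAt_neg x)
        rw [mul_neg, mul_one] at h0
        exact h0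
      have h2 : HasDerivAt H (-(g' (-x))) x := by
        refine h1.congr_of_eventuallyEq ?_
        filter_upwards [Ioo_mem_nhds (show -ε < x from hx.1) hx0] with y hy
        have hy' : -y ∈ Icc (0:ℝ) ε := ⟨by linarith [hy.2], by linarith [hy.1]⟩
        simp only [hHdef, hGdef, abs_of_neg hy.2, hc_id _ hy']
      have hval : H' x = -(g' (-x)) := by
        have hx'' : -x ∈ Icc (0:ℝ) ε := Ioo_subset_Icc_self hx'
        simp only [hH'def, if_pos hx0, hG'def, hc_id _ hx'']
      rw [hval]
      exact h2.hasDerivWithinAt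
    · -- x = 0
      have h1 : HasDerivWithinAt g (g' 0) (Ioc 0 ε) 0 :=
        (hderiv 0 ⟨le_rfl, hε0.le⟩).mono Ioc_subset_Icc_self
      have h2 : HasDerivWithinAt H (g' 0) (Ioc 0 ε) 0 := by
        refine h1.congr (fun y hy => hHg y (Ioc_subset_Icc_self hy)) ?_
        exact hHg 0 ⟨le_rfl, hε0.le⟩
      have h3 : HasDerivWithinAt H (g' 0) (Ioi 0) 0 :=
        h2.mono_of_mem_nhdsWithin (Ioc_mem_nhdsGT hε0)
      have hval : H' 0 = g' 0 := hH'g 0 ⟨le_rfl, hε0.le⟩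
      rw [hval]
      exact h3
    · -- x > 0
      have hx' : x ∈ Ioo (0:ℝ) ε := ⟨hx0, hx.2⟩
      have h2 : HasDerivAt H (g' x) x := by
        refine (hgC1 x hx').congr_of_eventuallyEq ?_
        filter_upwards [Ioo_mem_nhds hx0 hx.2] with y hy
        exact hHg y (Ioo_subset_Icc_self hy)
      have hval : H' x = g' x := hH'g x (Ioo_subset_Icc_self hx')
      rw [hval]
      exact h2.hasDerivWithinAt
  have hHD : ∀ x ∈ Ioo (-ε) ε,
      HasDerivWithinAt (fun y => (H y : ℂ)) ((H' x : ℂ)) (Ioi x) x :=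
    fun x hx => ofReal_hasDerivWithinAt (hHDr x hx)
  -- Fourier coefficients
  have hb : -ε + 2 * ε = ε := by ring
  have hH'int : IntervalIntegrable (fun x => (H' x : ℂ)) volume (-ε) (-ε + 2 * ε) :=
    intervalIntegrable_of_bdd hH'cmeas.aestronglyMeasurable hH'bd
  -- the coefficient relation
  have hrel : ∀ n : ℤ, n ≠ 0 → ‖fourierCoeffOn (lt_add_of_pos_right (-ε) hT.out) (fun x => (H x : ℂ)) n‖ = ε / (π * |(n:ℝ)|) * ‖fourierCoeffOn (lt_add_of_pos_right (-ε) hT.out) (fun x => (H' x : ℂ)) n‖ := by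
    intro n hn
    have hcont' : ContinuousOn (fun x => (H x : ℂ)) [[-ε, -ε + 2 * ε]] :=
      (Complex.continuous_ofReal.comp hHcont).continuousOn
    have hff' : ∀ x ∈ Ioo (min (-ε) (-ε + 2 * ε)) (max (-ε) (-ε + 2 * ε)),
        HasDerivWithinAt (fun y => (H y : ℂ)) ((H' x : ℂ)) (Ioi x) x := by
      intro x hxx
      rw [min_eq_left (by linarith), max_eq_right (by linarith), hb] at hxx
      exact hHD x hxx
    have h := fourierCoeffOn_of_hasDeriv_right (lt_add_of_pos_right (-ε) hT.out) hn
      hcont' hff' hH'int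
    have hends : ((H (-ε + 2 * ε) : ℂ)) - ((H (-ε) : ℂ)) = 0 := by
      rw [hb]
      simp only [sub_eq_zero, Complex.ofReal_inj]
      rw [← hHeven ε]
    rw [hends, mul_zero, zero_sub] at h
    rw [h]
    rw [norm_mul, norm_neg, norm_mul, norm_div, norm_one]
    have h1 : ‖(-2 * ↑π * Complex.I * (n:ℂ) : ℂ)‖ = 2 * π * |(n:ℝ)| := by
      simp only [norm_mul, norm_neg, Complex.norm_real, Complex.norm_I, mul_one,
        Real.norm_eq_abs, Complex.norm_intCast]
      rw [abs_of_pos hπ]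
      norm_num
    rw [h1]
    have h2e : ‖((-ε + 2*ε : ℝ) : ℂ) - ((-ε : ℝ) : ℂ)‖ = 2 * ε := by
      rw [← Complex.ofReal_sub, Complex.norm_real, Real.norm_eq_abs]
      rw [abs_of_pos (by linarith : (0:ℝ) < -ε + 2*ε - -ε)]
      ring
    rw [h2e]
    have hnabs : (0:ℝ) < |(n:ℝ)| := by
      simp only [abs_pos]
      exact_mod_cast hn
    field_simp
  -- the zero coefficient vanishes
  have hint1 : IntervalIntegrable (fun x => (H x : ℂ)) volume (-ε) 0 :=
    (Complex.continuous_ofReal.comp hHcont).intervalIntegrable _ _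
  have hint2 : IntervalIntegrable (fun x => (H x : ℂ)) volume 0 ε :=
    (Complex.continuous_ofReal.comp hHcont).intervalIntegrable _ _
  have hc0 : fourierCoeffOn (lt_add_of_pos_right (-ε) hT.out) (fun x => (H x : ℂ)) 0 = 0 := by
    rw [fourierCoeffOn_eq_integral]
    simp only [neg_zero, fourier_zero, one_smul]
    have hz : ∫ x in (-ε)..(-ε + 2*ε), ((H x : ℂ)) = 0 := by
      rw [hb, ← integral_add_adjacent_intervals hint1 hint2]
      have hneg : ∫ x in (-ε)..(0:ℝ), ((H x : ℂ)) = ∫ x in (0:ℝ)..ε, ((H x : ℂ)) := by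
        have h := integral_comp_neg (a := (0:ℝ)) (b := ε) (fun y => ((H y : ℂ)))
        simp only [neg_zero] at h
        rw [← h]
        refine integral_congr fun x hx => ?_
        rw [hHeven]
      have hright : ∫ x in (0:ℝ)..ε, ((H x : ℂ)) = 0 := by
        have h : ∫ x in (0:ℝ)..ε, ((H x : ℂ)) = ((∫ x in (0:ℝ)..ε, g x : ℝ) : ℂ) := by
          rw [← intervalIntegral.integral_ofReal]
          refine integral_congr fun x hx => ?_
          rw [uIcc_of_le hε0.le] at hx
          rw [hHg x hx]
        rw [h, hmean]
        norm_num
      rw [hneg, hright]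
      norm_num
    rw [hz, smul_zero]
  -- Parseval for both
  obtain ⟨hSummH, htsumH⟩ := parseval_interval (T := 2*ε) (-ε) (fun x => (H x : ℂ)) hHcmeas C hHbd
  obtain ⟨hSummH', htsumH'⟩ :=
    parseval_interval (T := 2*ε) (-ε) (fun x => (H' x : ℂ)) hH'cmeas C' hH'bd
  -- termwise bound
  have hterm : ∀ n : ℤ, (π/ε)^2 * ‖fourierCoeffOn (lt_add_of_pos_right (-ε) hT.out) (fun x => (H x : ℂ)) n‖^2 ≤ ‖fourierCoeffOn (lt_add_of_pos_right (-ε) hT.out) (fun x => (H' x : ℂ)) n‖^2 := by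
    intro n
    rcases eq_or_ne n 0 with rfl | hn
    · rw [hc0]
      simp [sq_nonneg]
    · rw [hrel n hn]
      have hn1 : (1:ℝ) ≤ |(n:ℝ)| := by
        rw [← Int.cast_abs]
        exact_mod_cast Int.one_le_abs hn
      have hkey : (π/ε) * (ε / (π * |(n:ℝ)|)) = 1 / |(n:ℝ)| := by
        rw [div_mul_div_comm]
        rw [div_eq_div_iff (by positivity) (by positivity)]
        ring
      have expand : (π/ε)^2 * (ε / (π * |(n:ℝ)|) * ‖fourierCoeffOn (lt_add_of_pos_right (-ε) hT.out) (fun x => (H' x : ℂ)) n‖)^2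
          = (1/|(n:ℝ)|)^2 * ‖fourierCoeffOn (lt_add_of_pos_right (-ε) hT.out) (fun x => (H' x : ℂ)) n‖^2 := by
        rw [mul_pow, ← mul_assoc, ← mul_pow, hkey]
      rw [expand]
      have hle1 : (1/|(n:ℝ)|)^2 ≤ 1 := by
        rw [div_pow, one_pow, div_le_one (by positivity)]
        nlinarith
      nlinarith [sq_nonneg ‖fourierCoeffOn (lt_add_of_pos_right (-ε) hT.out) (fun x => (H' x : ℂ)) n‖]
  -- sum the bound
  have hsum : (π/ε)^2 * ∑' n : ℤ, ‖fourierCoeffOn (lt_add_of_pos_right (-ε) hT.out) (fun x => (H x : ℂ)) n‖^2 ≤ ∑' n : ℤ, ‖fourierCoeffOn (lt_add_of_pos_right (-ε) hT.out) (fun x => (H' x : ℂ)) n‖^2 := by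
    rw [← tsum_mul_left]
    exact Summable.tsum_le_tsum hterm (hSummH.mul_left _) hSummH'
  -- compute the integrals
  have hIH : ∫ x in (-ε)..(-ε + 2*ε), ‖(H x : ℂ)‖^2 = 2 * ∫ x in (0:ℝ)..ε, (g x)^2 := by
    rw [hb]
    have i1 : IntervalIntegrable (fun x => ‖(H x : ℂ)‖^2) volume (-ε) 0 :=
      ((Complex.continuous_ofReal.comp hHcont).norm.pow 2).intervalIntegrable _ _
    have i2 : IntervalIntegrable (fun x => ‖(H x : ℂ)‖^2) volume 0 ε :=
      ((Complex.continuous_ofReal.comp hHcont).norm.pow 2).intervalIntegrable _ _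
    rw [← integral_add_adjacent_intervals i1 i2]
    have hneg : ∫ x in (-ε)..(0:ℝ), ‖(H x : ℂ)‖^2 = ∫ x in (0:ℝ)..ε, ‖(H x : ℂ)‖^2 := by
      have h := integral_comp_neg (a := (0:ℝ)) (b := ε) (fun y => ‖(H y : ℂ)‖^2)
      simp only [neg_zero] at h
      rw [← h]
      refine integral_congr fun x hx => ?_
      rw [hHeven]
    have hright : ∫ x in (0:ℝ)..ε, ‖(H x : ℂ)‖^2 = ∫ x in (0:ℝ)..ε, (g x)^2 := by
      refine integral_congr fun x hx => ?_
      rw [uIcc_of_le hε0.le] at hx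
      rw [hnormsq, hHg x hx]
    rw [hneg, hright]
    ring
  have hIH' : ∫ x in (-ε)..(-ε + 2*ε), ‖(H' x : ℂ)‖^2 = 2 * ∫ x in (0:ℝ)..ε, (g' x)^2 := by
    rw [hb]
    have hC'0 : (0:ℝ) ≤ C' := le_trans (norm_nonneg _) (hH'bd 0)
    have hmeasn : Measurable (fun x => ‖(H' x : ℂ)‖^2) := hH'cmeas.norm.pow measurable_const
    have hbdn : ∀ x, ‖‖(H' x : ℂ)‖^2‖ ≤ C'^2 := fun x => by
      rw [Real.norm_eq_abs, abs_of_nonneg (sq_nonneg _)]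
      have h := hH'bd x
      nlinarith [norm_nonneg ((H' x : ℂ))]
    have i1 : IntervalIntegrable (fun x => ‖(H' x : ℂ)‖^2) volume (-ε) 0 :=
      intervalIntegrable_of_bdd hmeasn.aestronglyMeasurable hbdn
    have i2 : IntervalIntegrable (fun x => ‖(H' x : ℂ)‖^2) volume 0 ε :=
      intervalIntegrable_of_bdd hmeasn.aestronglyMeasurable hbdn
    rw [← integral_add_adjacent_intervals i1 i2]
    have hneg : ∫ x in (-ε)..(0:ℝ), ‖(H' x : ℂ)‖^2 = ∫ x in (0:ℝ)..ε, (g' x)^2 := by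
      have h := integral_comp_neg (a := (0:ℝ)) (b := ε) (fun y => ‖(H' y : ℂ)‖^2)
      simp only [neg_zero] at h
      rw [← h]
      refine integral_congr fun x hx => ?_
      rw [uIcc_of_le hε0.le] at hx
      rw [hnormsq, hH'negsq x hx]
    have hright : ∫ x in (0:ℝ)..ε, ‖(H' x : ℂ)‖^2 = ∫ x in (0:ℝ)..ε, (g' x)^2 := by
      refine integral_congr fun x hx => ?_
      rw [uIcc_of_le hε0.le] at hx
      rw [hnormsq, hH'g x hx]
    rw [hneg, hright]
    ring
  -- conclude
  rw [htsumH, htsumH'] at hsum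
  rw [hIH, hIH'] at hsum
  have hfinal : ∀ X : ℝ, 1/(2*ε) * (2*X) = X/ε := fun X => by
    field_simp
  rw [hfinal, hfinal] at hsum
  calc (π / ε) ^ 2 * ∫ x in (0:ℝ)..ε, (g x) ^ 2
      = (π/ε)^2 * ((∫ x in (0:ℝ)..ε, (g x)^2)/ε) * ε := by field_simp
    _ ≤ (∫ x in (0:ℝ)..ε, (g' x)^2)/ε * ε := mul_le_mul_of_nonneg_right hsum hε0.le
    _ = ∫ x in (0:ℝ)..ε, (g' x)^2 := by field_simp

-- identity: sum over Icc 1 k of (2 α j ^2 + 2 α (j-1) ^2) = 4 * sum Icc 1 (k-1) α^2 + 2 (α k)^2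
lemma alg_id (k : ℕ) (α : ℕ → ℝ) (h0 : α 0 = 0) :
    ∑ j ∈ Finset.Icc 1 k, (2 * (α j) ^ 2 + 2 * (α (j - 1)) ^ 2)
      = 4 * ∑ j ∈ Finset.Icc 1 (k - 1), (α j) ^ 2 + 2 * (α k) ^ 2 := by
  induction k with
  | zero => simp [h0]
  | succ k ih =>
    rw [Finset.sum_Icc_succ_top (by omega : 1 ≤ k + 1), ih]
    have hstep : ∑ j ∈ Finset.Icc 1 (k + 1 - 1), (α j) ^ 2
        = ∑ j ∈ Finset.Icc 1 (k - 1), (α j) ^ 2 + (α k) ^ 2 := by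
      rcases Nat.eq_zero_or_pos k with rfl | hk
      · simp [h0]
      · rw [show k + 1 - 1 = (k - 1) + 1 by omega, Finset.sum_Icc_succ_top (by omega),
          show k - 1 + 1 = k by omega]
    rw [hstep]
    simp only [Nat.add_sub_cancel]
    ring

lemma step_eq (k : ℕ) (a α : ℕ → ℝ) (hα : ∀ i, α i = ∑ l ∈ Finset.Icc 1 i, a l) :
    ∀ j, 1 ≤ j → a j = α j - α (j - 1) := by
  intro j hj
  obtain ⟨m, rfl⟩ : ∃ m, j = m + 1 := ⟨j - 1, by omega⟩
  rw [hα, hα, Finset.sum_Icc_succ_top (by omega : 1 ≤ m + 1)]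
  simp

lemma alg_ineq (k : ℕ) (a α : ℕ → ℝ) (hα : ∀ i, α i = ∑ l ∈ Finset.Icc 1 i, a l)
    (hsum : α k = 0) :
    ∑ i ∈ Finset.Icc 1 k, (a i) ^ 2 ≤ 4 * ∑ i ∈ Finset.Icc 1 (k - 1), (α i) ^ 2 := by
  have h0 : α 0 = 0 := by simp [hα]
  calc ∑ i ∈ Finset.Icc 1 k, (a i) ^ 2
      ≤ ∑ i ∈ Finset.Icc 1 k, (2 * (α i) ^ 2 + 2 * (α (i - 1)) ^ 2) := by
        refine Finset.sum_le_sum fun i hi => ?_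
        rw [step_eq k a α hα i (Finset.mem_Icc.mp hi).1]
        nlinarith [sq_nonneg (α i + α (i - 1))]
    _ = 4 * ∑ i ∈ Finset.Icc 1 (k - 1), (α i) ^ 2 := by rw [alg_id k α h0, hsum]; ring

lemma alg_ineq_strict (k : ℕ) (a α : ℕ → ℝ) (hα : ∀ i, α i = ∑ l ∈ Finset.Icc 1 i, a l)
    (hsum : α k = 0) (hne : ∃ i ∈ Finset.Icc 1 k, a i ≠ 0) :
    ∑ i ∈ Finset.Icc 1 k, (a i) ^ 2 < 4 * ∑ i ∈ Finset.Icc 1 (k - 1), (α i) ^ 2 := by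
  have h0 : α 0 = 0 := by simp [hα]
  have hex : ∃ n, n ∈ Finset.Icc 1 k ∧ a n ≠ 0 := by
    obtain ⟨i, hi, hia⟩ := hne; exact ⟨i, hi, hia⟩
  classical
  let m := Nat.find hex
  have hm := Nat.find_spec hex
  have hmin : ∀ l < m, ¬(l ∈ Finset.Icc 1 k ∧ a l ≠ 0) := fun l hl => Nat.find_min hex hl
  have hm1 : 1 ≤ m := (Finset.mem_Icc.mp hm.1).1
  have hαm1 : α (m - 1) = 0 := by
    rw [hα]
    refine Finset.sum_eq_zero fun l hl => ?_
    have hl' := Finset.mem_Icc.mp hl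
    by_contra hla
    exact hmin l (by omega) ⟨Finset.mem_Icc.mpr ⟨hl'.1, by
      have := (Finset.mem_Icc.mp hm.1).2; omega⟩, hla⟩
  calc ∑ i ∈ Finset.Icc 1 k, (a i) ^ 2
      < ∑ i ∈ Finset.Icc 1 k, (2 * (α i) ^ 2 + 2 * (α (i - 1)) ^ 2) := by
        refine Finset.sum_lt_sum (fun i hi => ?_) ⟨m, hm.1, ?_⟩
        · rw [step_eq k a α hα i (Finset.mem_Icc.mp hi).1]
          nlinarith [sq_nonneg (α i + α (i - 1))]
        · rw [step_eq k a α hα m hm1, hαm1]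
          have : α m ≠ 0 := by
            rw [show α m = a m by rw [step_eq k a α hα m hm1, hαm1]; ring]
            exact hm.2
          nlinarith [sq_pos_of_ne_zero this]
    _ = 4 * ∑ i ∈ Finset.Icc 1 (k - 1), (α i) ^ 2 := by rw [alg_id k α h0, hsum]; ring


end AuxWirtinger

/-- Positivity of the lower bound for the second variation of the nonlocal
isoperimetric energy about the lamellar critical point `u_k` on the thin rectangle
`(0,ε)×(0,1)` when `ε < π√(k/(2γ))`: for a nontrivial perturbation decomposed on the
`j`-th interface as `a_j + g_j` with `Σa_j = 0` and each `g_j` mean-zero and `C¹`,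
`Σ∫g_j'² − (2γ/k)Σ∫g_j² + (2γε/k)[4Σα_j² − Σa_j²] > 0`, where `α_j = a₁+…+a_j`. -/
theorem stmt16 (k : ℕ) (hk : 1 ≤ k) (γ : ℝ) (hγ : 0 < γ)
    (ε : ℝ) (hε0 : 0 < ε) (hε : ε < Real.pi * Real.sqrt ((k : ℝ) / (2 * γ)))
    (a : ℕ → ℝ) (hsum : ∑ i ∈ Finset.Icc 1 k, a i = 0)
    (α : ℕ → ℝ) (hα : ∀ i, α i = ∑ l ∈ Finset.Icc 1 i, a l)
    (g g' : ℕ → ℝ → ℝ)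
    (hderiv : ∀ i ∈ Finset.Icc 1 k, ∀ x ∈ Set.Icc (0 : ℝ) ε,
      HasDerivWithinAt (g i) (g' i x) (Set.Icc (0 : ℝ) ε) x)
    (hcont : ∀ i ∈ Finset.Icc 1 k, ContinuousOn (g' i) (Set.Icc (0 : ℝ) ε))
    (hmean : ∀ i ∈ Finset.Icc 1 k, ∫ x in (0 : ℝ)..ε, g i x = 0)
    (hnontriv : (∃ i ∈ Finset.Icc 1 k, a i ≠ 0) ∨
      (∃ i ∈ Finset.Icc 1 k, ∃ x ∈ Set.Icc (0 : ℝ) ε, g i x ≠ 0)) :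
    0 < (∑ i ∈ Finset.Icc 1 k, ∫ x in (0 : ℝ)..ε, (g' i x) ^ 2)
        - (2 * γ / (k : ℝ)) * (∑ i ∈ Finset.Icc 1 k, ∫ x in (0 : ℝ)..ε, (g i x) ^ 2)
        + (2 * γ * ε / (k : ℝ)) * (4 * (∑ i ∈ Finset.Icc 1 (k - 1), (α i) ^ 2)
            - ∑ i ∈ Finset.Icc 1 k, (a i) ^ 2) := by
  have hk0 : (0:ℝ) < (k : ℝ) := by exact_mod_cast hk
  have hπ := Real.pi_pos
  -- ε < π√(k/(2γ)) gives 2γ/k < (π/ε)²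
  have hc : 2 * γ / (k:ℝ) < (Real.pi / ε) ^ 2 := by
    have hs : Real.sqrt ((k:ℝ)/(2*γ)) ^ 2 = (k:ℝ)/(2*γ) :=
      Real.sq_sqrt (by positivity)
    have hbpos : 0 < Real.pi * Real.sqrt ((k:ℝ)/(2*γ)) := lt_trans hε0 hε
    have h1 : ε ^ 2 < (Real.pi * Real.sqrt ((k:ℝ)/(2*γ))) ^ 2 :=
      sq_lt_sq' (by linarith) hε
    rw [mul_pow, hs] at h1
    rw [div_pow, div_lt_div_iff₀ hk0 (by positivity)]
    have h2 : 0 < 2 * γ := by linarith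
    have h3 : Real.pi^2 * ((k:ℝ)/(2*γ)) * (2*γ) = Real.pi^2 * k := by field_simp
    nlinarith [mul_lt_mul_of_pos_right h1 h2]
  -- Wirtinger bound for each interface
  have key : ∀ i ∈ Finset.Icc 1 k, (Real.pi/ε)^2 * (∫ x in (0:ℝ)..ε, (g i x)^2)
      ≤ ∫ x in (0:ℝ)..ε, (g' i x)^2 := fun i hi =>
    wirtinger hε0 (g i) (g' i) (hderiv i hi) (hcont i hi) (hmean i hi)
  have hnn : ∀ i ∈ Finset.Icc 1 k, 0 ≤ ∫ x in (0:ℝ)..ε, (g i x)^2 := fun i hi =>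
    intervalIntegral.integral_nonneg hε0.le (fun x _ => sq_nonneg _)
  have hS2nn : 0 ≤ ∑ i ∈ Finset.Icc 1 k, ∫ x in (0:ℝ)..ε, (g i x)^2 :=
    Finset.sum_nonneg hnn
  have hS1 : (Real.pi/ε)^2 * ∑ i ∈ Finset.Icc 1 k, (∫ x in (0:ℝ)..ε, (g i x)^2)
      ≤ ∑ i ∈ Finset.Icc 1 k, ∫ x in (0:ℝ)..ε, (g' i x)^2 := by
    rw [Finset.mul_sum]
    exact Finset.sum_le_sum key
  have hαk : α k = 0 := by rw [hα]; exact hsum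
  have hQ : ∑ i ∈ Finset.Icc 1 k, (a i)^2 ≤ 4 * ∑ i ∈ Finset.Icc 1 (k-1), (α i)^2 :=
    alg_ineq k a α hα hαk
  have hcoefnn : 0 ≤ 2 * γ * ε / (k:ℝ) := by positivity
  rcases hnontriv with h | ⟨i, hi, x, hx, hgx⟩
  · -- some a_i nonzero
    have hQs : ∑ i ∈ Finset.Icc 1 k, (a i)^2 < 4 * ∑ i ∈ Finset.Icc 1 (k-1), (α i)^2 :=
      alg_ineq_strict k a α hα hαk h
    have h2 : 0 < (2 * γ * ε / (k:ℝ)) * (4 * (∑ i ∈ Finset.Icc 1 (k-1), (α i)^2)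
        - ∑ i ∈ Finset.Icc 1 k, (a i)^2) := by
      apply mul_pos (by positivity)
      linarith
    have h1 : (2 * γ / (k:ℝ)) * ∑ i ∈ Finset.Icc 1 k, (∫ x in (0:ℝ)..ε, (g i x)^2)
        ≤ (Real.pi/ε)^2 * ∑ i ∈ Finset.Icc 1 k, (∫ x in (0:ℝ)..ε, (g i x)^2) :=
      mul_le_mul_of_nonneg_right hc.le hS2nn
    linarith
  · -- some g_i nonzero somewhere
    have hgcont : ContinuousOn (g i) (Set.Icc (0:ℝ) ε) := fun y hy =>
      (hderiv i hi y hy).continuousWithinAt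
    have hpos : 0 < ∫ x in (0:ℝ)..ε, (g i x)^2 := by
      refine intervalIntegral.integral_pos hε0 (hgcont.pow 2) (fun y _ => sq_nonneg _) ?_
      exact ⟨x, hx, by positivity⟩
    have hS2pos : 0 < ∑ i ∈ Finset.Icc 1 k, ∫ x in (0:ℝ)..ε, (g i x)^2 :=
      lt_of_lt_of_le hpos (Finset.single_le_sum hnn hi)
    have h1 : (2 * γ / (k:ℝ)) * ∑ i ∈ Finset.Icc 1 k, (∫ x in (0:ℝ)..ε, (g i x)^2)
        < (Real.pi/ε)^2 * ∑ i ∈ Finset.Icc 1 k, (∫ x in (0:ℝ)..ε, (g i x)^2) :=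
      mul_lt_mul_of_pos_right hc hS2pos
    have h2 : 0 ≤ (2 * γ * ε / (k:ℝ)) * (4 * (∑ i ∈ Finset.Icc 1 (k-1), (α i)^2)
        - ∑ i ∈ Finset.Icc 1 k, (a i)^2) := mul_nonneg hcoefnn (by linarith)
    linarith
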